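/- Let (E,ℒ,𝒜) be a weakly left-resolving, normal labelled space. If s = (α,A,β) ∈ S and e₁ = (βδ₁,B₁,βδ₁), …, eₙ = (βδₙ,Bₙ,βδₙ) ∈ E(S) are such that Bᵢ ⊆ r(A,δᵢ) for each i, then σ^{|α|} restricted to V_{ss*:f₁,…,fₙ} is injective, σ^{|β|} restricted to V_{s*s:e₁,…,eₙ} is injective, and Z_{s:e₁,…,eₙ} = 𝒱(V_{ss*:f₁,…,fₙ}, V_{s*s:e₁,…,eₙ}, |α|, |β|), where f₁ = (αδ₁,B₁,αδ₁), …, fₙ = (αδₙ,Bₙ,αδₙ). -/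

import Mathlib

open Classical

universe u v w

/-! ## Words over an alphabet -/

/-- Finite-or-infinite words over the alphabet `A`: `Sum.inl l` is the finite word `l`
(with `[]` playing the role of the empty word `ω`), and `Sum.inr f` is the infinite word `f`. -/
abbrev Word (A : Type w) := List A ⊕ (ℕ → A)

/-- The length `|α| ∈ ℕ∞` of a word. -/
def wlength {A : Type w} : Word A → ℕ∞ :=
  Sum.elim (fun l => (l.length : ℕ∞)) fun _ => ⊤

/-- The finite prefix `α_{1,n}` of a word `α`. -/
def wprefix {A : Type w} : Word A → ℕ → List A :=
  Sum.elim (fun l n => l.take n) fun f n => List.ofFn fun i : Fin n => f i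

/-- Concatenation `αβ` of a finite word `α` with a word `β`. -/
def wappend {A : Type w} (α : List A) : Word A → Word A :=
  Sum.elim (fun l => Sum.inl (α ++ l)) fun f =>
    Sum.inr fun n => if h : n < α.length then α.get ⟨n, h⟩ else f (n - α.length)

/-- `β` is a beginning (finite prefix) of the word `α`. -/
def WPrefix {A : Type w} (β : List A) : Word A → Prop :=
  Sum.elim (fun l => β <+: l) fun f => β = List.ofFn fun i : Fin β.length => f i

/-! ## Triples -/

/-- Formal triples `(α, X, β)` together with a zero element; the inverse semigroup `S`
of a labelled space consists of such elements. -/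
inductive Tr (V : Type u) (A : Type w) where
  | zero : Tr V A
  | mk : List A → Set V → List A → Tr V A

/-- The involution `(α,A,β)* = (β,A,α)` (fixing `0`). -/
def Tr.tstar {V : Type u} {A : Type w} : Tr V A → Tr V A
  | .zero => .zero
  | .mk α X β => .mk β X α

/-! ## Labelled spaces -/

/-- The data of a labelled space `(E, ℒ, 𝒜)`: a directed graph on nonempty vertex/edge
sets, a surjective labelling map onto the alphabet `A`, and a family `𝒜` of subsets
of the vertex set. -/
structure LblSp (V : Type u) (E : Type v) (A : Type w) where
  src : E → V
  rng : E → V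
  lab : E → A
  lab_surj : Function.Surjective lab
  nonempty_V : Nonempty V
  nonempty_E : Nonempty E
  𝒜 : Set (Set V)

namespace LblSp

variable {V : Type u} {Ed : Type v} {A : Type w} (Λ : LblSp V Ed A)

/-- `α ≠ ω` is the label of some finite path of the graph. -/
def IsPathLabel (α : List A) : Prop :=
  ∃ l : List Ed, l ≠ [] ∧ List.Chain' (fun e f => Λ.rng e = Λ.src f) l ∧ l.map Λ.lab = α

/-- `ℒ^*`: the finite labelled paths, together with the empty word. -/
def LStar : Set (List A) := {α | α = [] ∨ Λ.IsPathLabel α}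

/-- `ℒ^∞`: the infinite labelled paths. -/
def LInfty : Set (ℕ → A) :=
  {f | ∃ e : ℕ → Ed, (∀ n, Λ.rng (e n) = Λ.src (e (n + 1))) ∧ ∀ n, Λ.lab (e n) = f n}

/-- `ℒ^{≤∞} = ℒ^* ∪ ℒ^∞`, as a predicate on `Word A`. -/
def IsWordW : Word A → Prop := Sum.elim (· ∈ Λ.LStar) (· ∈ Λ.LInfty)

/-- The relative range `r(X, α)` (with `r(X, ω) = X`). -/
noncomputable def relRange (X : Set V) (α : List A) : Set V :=
  if α = [] then X
  else {v | ∃ (l : List Ed) (h : l ≠ []), List.Chain' (fun e f => Λ.rng e = Λ.src f) l ∧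
        l.map Λ.lab = α ∧ Λ.src (l.head h) ∈ X ∧ Λ.rng (l.getLast h) = v}

/-- The range `r(α) = r(E⁰, α)`. -/
noncomputable def rangeL (α : List A) : Set V := Λ.relRange Set.univ α

/-- `𝒜^α = {X ∈ 𝒜 : X ⊆ r(α)}`. -/
noncomputable def Aset (α : List A) : Set (Set V) := {X | X ∈ Λ.𝒜 ∧ X ⊆ Λ.rangeL α}

/-- `(E, ℒ, 𝒜)` is a labelled space: `𝒜` is closed under finite intersections and
unions, contains all ranges `r(α)` for `α ∈ ℒ^{≥1}`, and is closed under relative ranges. -/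
structure IsLS : Prop where
  inter_mem : ∀ X ∈ Λ.𝒜, ∀ Y ∈ Λ.𝒜, X ∩ Y ∈ Λ.𝒜
  union_mem : ∀ X ∈ Λ.𝒜, ∀ Y ∈ Λ.𝒜, X ∪ Y ∈ Λ.𝒜
  range_mem : ∀ α ∈ Λ.LStar, α ≠ [] → Λ.rangeL α ∈ Λ.𝒜
  relRange_mem : ∀ X ∈ Λ.𝒜, ∀ α ∈ Λ.LStar, Λ.relRange X α ∈ Λ.𝒜

/-- A weakly left-resolving labelled space. -/
structure IsWLR : Prop where
  toIsLS : Λ.IsLS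
  wlr : ∀ X ∈ Λ.𝒜, ∀ Y ∈ Λ.𝒜, ∀ α ∈ Λ.LStar, α ≠ [] →
    Λ.relRange (X ∩ Y) α = Λ.relRange X α ∩ Λ.relRange Y α

/-- A weakly left-resolving normal labelled space. -/
structure IsNormal : Prop where
  toIsWLR : Λ.IsWLR
  sdiff_mem : ∀ X ∈ Λ.𝒜, ∀ Y ∈ Λ.𝒜, X \ Y ∈ Λ.𝒜

/-! ## The inverse semigroup `S` -/

/-- The underlying set of the inverse semigroup
`S = {(α,A,β) : α, β ∈ ℒ^*, A ∈ 𝒜^α ∩ 𝒜^β, A ≠ ∅} ∪ {0}`. -/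
def SSet : Set (Tr V A) :=
  {t | t = Tr.zero ∨ ∃ α X β, t = Tr.mk α X β ∧ α ∈ Λ.LStar ∧ β ∈ Λ.LStar ∧
    X ∈ Λ.Aset α ∧ X ∈ Λ.Aset β ∧ X.Nonempty}

/-- The semilattice of idempotents `E(S) = {(α,A,α)} ∪ {0}`. -/
def ESet : Set (Tr V A) :=
  {t | t = Tr.zero ∨ ∃ α X, t = Tr.mk α X α ∧ α ∈ Λ.LStar ∧ X ∈ Λ.Aset α ∧ X.Nonempty}

/-- The product of `S`. -/
noncomputable def tmul : Tr V A → Tr V A → Tr V A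
  | Tr.zero, _ => Tr.zero
  | Tr.mk _ _ _, Tr.zero => Tr.zero
  | Tr.mk α X β, Tr.mk γ Y δ =>
    if β <+: γ ∧ (Λ.relRange X (γ.drop β.length) ∩ Y).Nonempty then
      Tr.mk (α ++ γ.drop β.length) (Λ.relRange X (γ.drop β.length) ∩ Y) δ
    else if γ <+: β ∧ (X ∩ Λ.relRange Y (β.drop γ.length)).Nonempty then
      Tr.mk α (X ∩ Λ.relRange Y (β.drop γ.length)) (δ ++ β.drop γ.length)
    else Tr.zero

/-! ## Filters in `E(S)`, characters, and the tight spectrum -/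

/-- A filter in `E(S)`: a nonempty subset of `E(S) ∖ {0}` closed under products and
upward closed in the natural order (`p ≤ q ↔ pq = p`). -/
def IsFilterES (ξ : Set (Tr V A)) : Prop :=
  ξ.Nonempty ∧ (∀ t ∈ ξ, t ∈ Λ.ESet ∧ t ≠ Tr.zero) ∧
  (∀ p ∈ ξ, ∀ q ∈ ξ, Λ.tmul p q ∈ ξ) ∧
  (∀ p ∈ ξ, ∀ q ∈ Λ.ESet, Λ.tmul p q = p → q ∈ ξ)

/-- An ultrafilter in `E(S)`. -/
def IsUltraES (ξ : Set (Tr V A)) : Prop :=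
  Λ.IsFilterES ξ ∧ ∀ ζ, Λ.IsFilterES ζ → ξ ⊆ ζ → ξ = ζ

/-- The character (indicator function) of a filter. -/
noncomputable def charOf (_Λ : LblSp V Ed A) (ξ : Set (Tr V A)) : Tr V A → Bool :=
  fun t => if t ∈ ξ then true else false

/-- A character of `E(S)`: a nonzero, zero- and meet-preserving `{0,1}`-valued map on
`E(S)` (encoded as a map on triples vanishing outside `E(S)`). -/
def IsChar (φ : Tr V A → Bool) : Prop :=
  (∃ e, φ e = true) ∧ (∀ e, e ∉ Λ.ESet → φ e = false) ∧ φ Tr.zero = false ∧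
  ∀ e ∈ Λ.ESet, ∀ f ∈ Λ.ESet, φ (Λ.tmul e f) = (φ e && φ f)

/-- The tight spectrum `Ê_tight`: the closure, within the space of characters with the
topology of pointwise convergence, of the set of characters of ultrafilters. -/
def tightSpectrum : Set (Tr V A → Bool) :=
  {φ | Λ.IsChar φ} ∩ closure {φ | ∃ ξ, Λ.IsUltraES ξ ∧ φ = Λ.charOf ξ}

/-- A tight filter: a filter whose character lies in the tight spectrum. -/
def IsTightFilter (ξ : Set (Tr V A)) : Prop :=
  Λ.IsFilterES ξ ∧ Λ.charOf ξ ∈ Λ.tightSpectrum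

/-- `ξ_{|β|} = {B : (β, B, β) ∈ ξ}`, the filter of `ξ` at level `β`. -/
def filterAt (_Λ : LblSp V Ed A) (ξ : Set (Tr V A)) (β : List A) : Set (Set V) :=
  {B | Tr.mk β B β ∈ ξ}

/-- `α` is the word associated with the filter `ξ` (i.e. `ξ = ξ^α`): the nonempty finite
beginnings of `α` are exactly the words appearing in elements of `ξ`. -/
def HasWord (_Λ : LblSp V Ed A) (ξ : Set (Tr V A)) (α : Word A) : Prop :=
  ∀ β : List A, β ≠ [] → ((∃ B, Tr.mk β B β ∈ ξ) ↔ WPrefix β α)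

/-! ## Filters and ultrafilters in `𝒜^β` -/

/-- A filter in the Boolean algebra `𝒜^β`. -/
def IsFilterAset (β : List A) (F : Set (Set V)) : Prop :=
  F.Nonempty ∧ F ⊆ Λ.Aset β ∧ (∀ X ∈ F, X.Nonempty) ∧
  (∀ X ∈ F, ∀ Y ∈ F, X ∩ Y ∈ F) ∧ (∀ X ∈ F, ∀ Y ∈ Λ.Aset β, X ⊆ Y → Y ∈ F)

/-- An ultrafilter in `𝒜^β` (an element of `X_β`). -/
def IsUltraAset (β : List A) (F : Set (Set V)) : Prop :=
  Λ.IsFilterAset β F ∧ ∀ G, Λ.IsFilterAset β G → F ⊆ G → F = G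

/-- The gluing map `g_{(α)β}(F) = {C ∩ r(αβ) : C ∈ F}` on ultrafilters. -/
noncomputable def gmap (α β : List A) (F : Set (Set V)) : Set (Set V) :=
  {X | ∃ C ∈ F, X = C ∩ Λ.rangeL (α ++ β)}

/-- The cutting map `h_{[α]β}(F) = {C ∈ 𝒜^β : D ⊆ C for some D ∈ F}` on ultrafilters. -/
noncomputable def hmap (α β : List A) (F : Set (Set V)) : Set (Set V) :=
  {C | C ∈ Λ.Aset β ∧ ∃ D ∈ F, D ⊆ C}

/-! ## Cutting and gluing of (tight) filters in `E(S)` -/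

/-- The cutting map `H_{[α]β} : T^{αβ} → T^{(α)β}` (word-free formulation): the filter
whose family is `η_n = h_{[α]β_{1,n}}(ξ_{n+|α|})`; `H_{[ω]β}` is the identity. -/
noncomputable def Hcut (α : List A) (ξ : Set (Tr V A)) : Set (Tr V A) :=
  if α = [] then ξ
  else {t | ∃ δ B, t = Tr.mk δ B δ ∧ B ∈ Λ.Aset δ ∧
        ∃ D, Tr.mk (α ++ δ) D (α ++ δ) ∈ ξ ∧ D ⊆ B}

/-- The gluing map `G_{(α)β} : T^{(α)β} → T^{αβ}` (word-free formulation): the filter with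
family `η_{|α|+n} = g_{(α)β_{1,n}}(ξ_n)` for `n ≥ 1` and `η_i = f_{α_{1,i}[…]}(…)` for
`i ≤ |α|`, with the two cases according to whether the word of `ξ` is empty (`β = ω`)
or not; `G_{(ω)β}` is the identity. -/
noncomputable def Gglue (α : List A) (ξ : Set (Tr V A)) : Set (Tr V A) :=
  if α = [] then ξ
  else if ∃ (δ : List A) (B : Set V), δ ≠ [] ∧ Tr.mk δ B δ ∈ ξ then
    {t | ∃ δ B, t = Tr.mk δ B δ ∧
      ((α <+: δ ∧ α ≠ δ ∧ ∃ C, Tr.mk (δ.drop α.length) C (δ.drop α.length) ∈ ξ ∧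
          B = C ∩ Λ.rangeL δ) ∨
       (δ <+: α ∧ B ∈ Λ.Aset δ ∧ ∃ (b : A) (C : Set V), Tr.mk [b] C [b] ∈ ξ ∧
          Λ.relRange B (α.drop δ.length ++ [b]) = C ∩ Λ.rangeL (α ++ [b])))}
  else
    {t | ∃ δ B, t = Tr.mk δ B δ ∧ δ <+: α ∧ B ∈ Λ.Aset δ ∧
      ∃ C, Tr.mk [] C [] ∈ ξ ∧ Λ.relRange B (α.drop δ.length) = C ∩ Λ.rangeL α}

/-- `T^β`: the set of tight filters with associated word `β`. -/
def TWord (β : Word A) : Set (Set (Tr V A)) :=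
  {ξ | Λ.IsTightFilter ξ ∧ Λ.HasWord ξ β}

/-- `T^{(α)β} = {ξ ∈ T^β : r(α) ∈ ξ_0}` (equal to `T^β` when `α = ω`), the domain of the
gluing map `G_{(α)β}`. -/
def TGlueDom (α : List A) (β : Word A) : Set (Set (Tr V A)) :=
  {ξ | Λ.IsTightFilter ξ ∧ Λ.HasWord ξ β ∧ (α ≠ [] → Tr.mk [] (Λ.rangeL α) [] ∈ ξ)}

/-! ## The groupoid `Γ` -/

/-- The defining relation of
`Γ = {(ξ^{aγ}, |a|-|b|, η^{bγ}) ∈ T × ℤ × T : H_{[a]γ}(ξ^{aγ}) = H_{[b]γ}(η^{bγ})}`. -/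
def InGamma (η : Set (Tr V A)) (m : ℤ) (ξ : Set (Tr V A)) : Prop :=
  ∃ (a b : List A) (γ : Word A), a ∈ Λ.LStar ∧ b ∈ Λ.LStar ∧ Λ.IsWordW γ ∧
    η ∈ Λ.TWord (wappend a γ) ∧ ξ ∈ Λ.TWord (wappend b γ) ∧
    m = (a.length : ℤ) - (b.length : ℤ) ∧ Λ.Hcut a η = Λ.Hcut b ξ

/-- `Γ` as a set of raw triples. -/
def GammaRaw : Set (Set (Tr V A) × ℤ × Set (Tr V A)) :=
  {p | Λ.InGamma p.1 p.2.1 p.2.2}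

/-- The basic set `Z_{s,e:e₁,…,eₙ}` of `Γ` (raw version), for `s = (μ, X, ν)`:
triples `(η^{μγ}, |μ|-|ν|, ξ^{νγ}) ∈ Γ` with `e ∈ ξ`, `eᵢ ∉ ξ` and
`H_{[μ]γ}(η) = H_{[ν]γ}(ξ)`. -/
noncomputable def ZrawGen (μ ν : List A) (e : Tr V A) (es : List (Tr V A)) :
    Set (Set (Tr V A) × ℤ × Set (Tr V A)) :=
  {p | Λ.InGamma p.1 p.2.1 p.2.2 ∧ p.2.1 = (μ.length : ℤ) - (ν.length : ℤ) ∧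
       e ∈ p.2.2 ∧ (∀ f ∈ es, f ∉ p.2.2) ∧
       ∃ γ : Word A, Λ.HasWord p.1 (wappend μ γ) ∧ Λ.HasWord p.2.2 (wappend ν γ) ∧
         Λ.Hcut μ p.1 = Λ.Hcut ν p.2.2}

/-- `Z_s = Z_{s, s*s}` for `s = (μ, X, ν)` (raw version). -/
noncomputable def Zraw (μ : List A) (X : Set V) (ν : List A) :
    Set (Set (Tr V A) × ℤ × Set (Tr V A)) :=
  Λ.ZrawGen μ ν (Tr.mk ν X ν) []

/-- The basic set `V_{e:e₁,…,eₙ} = U_{e:e₁,…,eₙ} ∩ T` of the tight filter space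
(raw version). -/
def VrawGen (e : Tr V A) (es : List (Tr V A)) : Set (Set (Tr V A)) :=
  {ξ | Λ.IsTightFilter ξ ∧ e ∈ ξ ∧ ∀ f ∈ es, f ∉ ξ}

/-- The shift map `σ : T^{(1)} → T`, `σ(ξ^{aγ}) = H_{[a]γ}(ξ^{aγ})` (extended by the
identity off its domain). -/
noncomputable def sigmaMap (ξ : Set (Tr V A)) : Set (Tr V A) :=
  if h : ∃ a : A, ∃ B : Set V, Tr.mk [a] B [a] ∈ ξ then Λ.Hcut [h.choose] ξ else ξ

/-- The Renault–Deaconu basic set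
`𝒱(X, Y, m, n) = {(η, m-n, ξ) ∈ Γ : (η, ξ) ∈ X × Y, σ^m(η) = σ^n(ξ)}` (raw version). -/
noncomputable def VrdRaw (Xs Ys : Set (Set (Tr V A))) (m n : ℕ) :
    Set (Set (Tr V A) × ℤ × Set (Tr V A)) :=
  {p | Λ.InGamma p.1 p.2.1 p.2.2 ∧ p.2.1 = (m : ℤ) - (n : ℤ) ∧
       p.1 ∈ Xs ∧ p.2.2 ∈ Ys ∧ (Λ.sigmaMap)^[m] p.1 = (Λ.sigmaMap)^[n] p.2.2}

/-! ## The groupoid of germs `𝒢_tight` -/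

/-- The action `θ_s(φ)(e) = φ(s* e s)` of `S` on characters. -/
noncomputable def theta (s : Tr V A) (φ : Tr V A → Bool) : Tr V A → Bool :=
  fun e => if e ∈ Λ.ESet then φ (Λ.tmul (Λ.tmul (Tr.tstar s) e) s) else false

/-- `Ω = {(s, φ) ∈ S × Ê_tight : φ ∈ D_{s*s}}`. -/
noncomputable def Omega : Set (Tr V A × (Tr V A → Bool)) :=
  {p | p.1 ∈ Λ.SSet ∧ p.2 ∈ Λ.tightSpectrum ∧ p.2 (Λ.tmul (Tr.tstar p.1) p.1) = true}

/-- The germ equivalence relation on `Ω`: `(s,φ) ∼ (t,ψ)` iff `φ = ψ` and there is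
`e ∈ E(S)` with `φ(e) = 1` and `se = te`. -/
noncomputable def germEquiv (p q : Tr V A × (Tr V A → Bool)) : Prop :=
  p.2 = q.2 ∧ ∃ e ∈ Λ.ESet, p.2 e = true ∧ Λ.tmul p.1 e = Λ.tmul q.1 e

/-- The map `Φ` at the level of `Ω`: for `t = (β, X, γ)` and `φ` with filter `ξ^α`
(where `α = γα'`), `Φ[t,φ] = ((G_{(β)α'} ∘ H_{[γ]α'})(ξ^α), |β|-|γ|, ξ^α)`. -/
noncomputable def PhiRaw : Tr V A → (Tr V A → Bool) → Set (Tr V A) × ℤ × Set (Tr V A)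
  | Tr.zero, _ => (∅, 0, ∅)
  | Tr.mk β _ γ, φ =>
      (Λ.Gglue β (Λ.Hcut γ {e | φ e = true}), (β.length : ℤ) - (γ.length : ℤ),
        {e | φ e = true})

/-! ## Miscellaneous notions -/

/-- `ℒ(XE¹) = {ℒ(e) : e ∈ E¹, s(e) ∈ X}`. -/
def labE (X : Set V) : Set A := {a | ∃ e, Λ.lab e = a ∧ Λ.src e ∈ X}

/-- The set `E⁰_sink` of sinks. -/
def sinks : Set V := {v | ∀ e, Λ.src e ≠ v}

/-- The filter in `E(S)` associated with a pair (word, complete family). -/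
def pairFilter (_Λ : LblSp V Ed A) (α : Word A) (F : ℕ → Set (Set V)) : Set (Tr V A) :=
  {t | ∃ (n : ℕ) (B : Set V), (n : ℕ∞) ≤ wlength α ∧ B ∈ F n ∧
    t = Tr.mk (wprefix α n) B (wprefix α n)}

/-- A complete family for the word `α`: `F n` is a filter in `𝒜^{α_{1,n}}` for
`1 ≤ n ≤ |α|` (`F 0` is a filter in `𝒜` or empty, and a filter if `α = ω`), and
`F n = {X ∈ 𝒜^{α_{1,n}} : r(X, α_{n+1}) ∈ F (n+1)}` for all `n < |α|`. -/
noncomputable def IsCompleteFamily (α : Word A) (F : ℕ → Set (Set V)) : Prop :=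
  Λ.IsWordW α ∧
  (∀ n : ℕ, 1 ≤ n → (n : ℕ∞) ≤ wlength α → Λ.IsFilterAset (wprefix α n) (F n)) ∧
  (F 0 = ∅ ∨ Λ.IsFilterAset [] (F 0)) ∧
  (wlength α = 0 → Λ.IsFilterAset [] (F 0)) ∧
  (∀ n : ℕ, ((n + 1 : ℕ) : ℕ∞) ≤ wlength α →
    F n = {X | X ∈ Λ.Aset (wprefix α n) ∧
      Λ.relRange X ((wprefix α (n + 1)).drop n) ∈ F (n + 1)})

/-! ## The tight filter space `T` and the groupoid `Γ` as types -/

/-- The space `T` of tight filters. -/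
structure TightT where
  carrier : Set (Tr V A)
  tight : Λ.IsTightFilter carrier

/-- The topology of `T`, induced from pointwise convergence of characters. -/
noncomputable instance : TopologicalSpace Λ.TightT :=
  TopologicalSpace.induced (fun ξ => Λ.charOf ξ.carrier) inferInstance

/-- The groupoid `Γ ⊆ T × ℤ × T` as a type. -/
structure GammaT where
  fst : Λ.TightT
  mid : ℤ
  lst : Λ.TightT
  mem : Λ.InGamma fst.carrier mid lst.carrier

/-- The raw triple underlying an element of `Γ`. -/
def rawOf (p : Λ.GammaT) : Set (Tr V A) × ℤ × Set (Tr V A) :=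
  (p.fst.carrier, p.mid, p.lst.carrier)

/-- The collection of all sets `Z_{s,e:e₁,…,eₙ}` (for `s ∈ S`, `e, eᵢ ∈ E(S)`),
as subsets of `Γ`. -/
noncomputable def ZBasisT : Set (Set Λ.GammaT) :=
  {Z | ∃ (μ : List A) (X : Set V) (ν : List A) (e : Tr V A) (es : List (Tr V A)),
    Tr.mk μ X ν ∈ Λ.SSet ∧ e ∈ Λ.ESet ∧ (∀ f ∈ es, f ∈ Λ.ESet) ∧
    Z = {p : Λ.GammaT | Λ.rawOf p ∈ Λ.ZrawGen μ ν e es}}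

/-- The topology on `Γ` induced by the isomorphism `Φ` from the germ topology of
`𝒢_tight`, generated by the images of the basic sets `Θ(s, 𝒰)` with `𝒰 ⊆ D_{s*s}`
open in the tight spectrum. -/
noncomputable def PhiTopology : TopologicalSpace Λ.GammaT :=
  TopologicalSpace.generateFrom
    {Z | ∃ (s : Tr V A) (U : Set (Tr V A → Bool)), s ∈ Λ.SSet ∧
      (∃ W, IsOpen W ∧ U = W ∩ Λ.tightSpectrum) ∧
      (∀ φ ∈ U, φ (Λ.tmul (Tr.tstar s) s) = true) ∧
      Z = {p : Λ.GammaT | ∃ φ ∈ U, (s, φ) ∈ Λ.Omega ∧ Λ.PhiRaw s φ = Λ.rawOf p}}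

end LblSp

/-! ### Auxiliary lemmas on words -/

section WordLemmas

variable {A : Type w}

lemma wprefix_nil (w : Word A) : WPrefix ([] : List A) w := by
  cases w with
  | inl l => exact List.nil_prefix
  | inr f => show ([] : List A) = _; simp

lemma wprefix_inr_iff {ε : List A} {f : ℕ → A} :
    WPrefix ε (Sum.inr f : Word A) ↔ ∀ (i : ℕ) (h : i < ε.length), ε[i] = f i := by
  constructor
  · intro h i hi
    have := List.getElem_of_eq h hi
    rwa [List.getElem_ofFn] at this
  · intro h
    apply List.ext_getElem (by simp)
    intro n h₁ h₂
    rw [List.getElem_ofFn]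
    exact h n h₁

lemma wappend_inr (β : List A) (f : ℕ → A) :
    wappend β (Sum.inr f : Word A) =
      Sum.inr (fun n => if h : n < β.length then β.get ⟨n, h⟩ else f (n - β.length)) := rfl

lemma wappend_inl (β l : List A) : wappend β (Sum.inl l : Word A) = Sum.inl (β ++ l) := rfl

lemma wappend_nil_word (γ : Word A) : wappend ([] : List A) γ = γ := by
  cases γ with
  | inl l => rfl
  | inr f =>
    rw [wappend_inr]
    simp

lemma wprefix_of_prefix {ε β : List A} {γ : Word A} (h : ε <+: β) :
    WPrefix ε (wappend β γ) := by
  cases γ with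
  | inl l => exact h.trans (List.prefix_append β l)
  | inr f =>
    rw [wappend_inr, wprefix_inr_iff]
    intro i hi
    have hib : i < β.length := lt_of_lt_of_le hi h.length_le
    rw [dif_pos hib, List.get_eq_getElem]
    exact h.getElem hi

lemma prefix_of_wprefix_le {ε β : List A} {γ : Word A} (h : WPrefix ε (wappend β γ))
    (hle : ε.length ≤ β.length) : ε <+: β := by
  cases γ with
  | inl l => exact List.prefix_of_prefix_length_le h (List.prefix_append β l) hle
  | inr f =>
    rw [wappend_inr, wprefix_inr_iff] at h
    rw [List.prefix_iff_eq_take]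
    apply List.ext_getElem (by simp [hle])
    intro n h₁ h₂
    rw [List.getElem_take]
    have h3 := h n h₁
    rwa [dif_pos (lt_of_lt_of_le h₁ hle), List.get_eq_getElem] at h3

lemma wprefix_drop {ε β : List A} {γ : Word A} (h : WPrefix ε (wappend β γ))
    (hlt : β.length < ε.length) : β <+: ε ∧ WPrefix (ε.drop β.length) γ := by
  cases γ with
  | inl l =>
    have h' : ε <+: β ++ l := h
    have hβε : β <+: ε := List.prefix_of_prefix_length_le (List.prefix_append β l) h' hlt.le
    obtain ⟨t, rfl⟩ := hβε
    refine ⟨List.prefix_append β t, ?_⟩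
    show (β ++ t).drop β.length <+: l
    rw [List.drop_left]
    exact (List.prefix_append_right_inj β).mp h'
  | inr f =>
    rw [wappend_inr, wprefix_inr_iff] at h
    have hβε : β <+: ε := by
      rw [List.prefix_iff_eq_take]
      apply List.ext_getElem (by simp [hlt.le])
      intro n h₁ h₂
      rw [List.getElem_take]
      have h3 := h n (lt_of_lt_of_le h₁ hlt.le)
      rw [dif_pos h₁, List.get_eq_getElem] at h3
      exact h3.symm
    refine ⟨hβε, ?_⟩
    rw [wprefix_inr_iff]
    intro i hi
    rw [List.getElem_drop]
    have hi' : β.length + i < ε.length := by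
      simp only [List.length_drop] at hi; omega
    have h3 := h (β.length + i) hi'
    rw [dif_neg (by omega)] at h3
    simpa using h3

lemma wprefix_append_iff {δ β : List A} {γ : Word A} :
    WPrefix (β ++ δ) (wappend β γ) ↔ WPrefix δ γ := by
  constructor
  · intro h
    by_cases hδ : δ = []
    · subst hδ; exact wprefix_nil γ
    · have hlt : β.length < (β ++ δ).length := by
        simp only [List.length_append]
        have : δ.length ≠ 0 := fun h0 => hδ (List.length_eq_zero_iff.mp h0)
        omega
      have := (wprefix_drop h hlt).2
      rwa [List.drop_left] at this
  · intro h
    cases γ with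
    | inl l => exact (List.prefix_append_right_inj β).mpr h
    | inr f =>
      rw [wappend_inr, wprefix_inr_iff]
      rw [wprefix_inr_iff] at h
      intro i hi
      by_cases hib : i < β.length
      · rw [List.getElem_append_left hib, dif_pos hib, List.get_eq_getElem]
      · push_neg at hib
        have hi' : i - β.length < δ.length := by
          simp only [List.length_append] at hi; omega
        rw [List.getElem_append_right hib, dif_neg (by omega)]
        exact h _ hi'

lemma exists_wappend {α : List A} {w : Word A} (h : WPrefix α w) :
    ∃ γ, w = wappend α γ := by
  cases w with
  | inl l =>
    obtain ⟨t, rfl⟩ := h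
    exact ⟨Sum.inl t, rfl⟩
  | inr f =>
    refine ⟨Sum.inr (fun n => f (n + α.length)), ?_⟩
    rw [wappend_inr]
    congr 1
    funext n
    rw [wprefix_inr_iff] at h
    by_cases hn : n < α.length
    · rw [dif_pos hn, List.get_eq_getElem]
      exact (h n hn).symm
    · rw [dif_neg hn]
      congr 1
      omega

end WordLemmas
/-! ### Auxiliary lemmas on labelled spaces -/

namespace LblSp

section RangeLemmas

variable {V : Type u} {Ed : Type v} {A : Type w} (Λ : LblSp V Ed A)

lemma relRange_def (X : Set V) (a : List A) : Λ.relRange X a =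
    if a = [] then X
    else {v | ∃ (l : List Ed) (h : l ≠ []), List.Chain' (fun e f => Λ.rng e = Λ.src f) l ∧
        l.map Λ.lab = a ∧ Λ.src (l.head h) ∈ X ∧ Λ.rng (l.getLast h) = v} := by
  unfold LblSp.relRange; rfl

lemma relRange_nil (X : Set V) : Λ.relRange X ([] : List A) = X := by
  rw [Λ.relRange_def, if_pos rfl]

lemma rangeL_eq (a : List A) : Λ.rangeL a = Λ.relRange Set.univ a := rfl

lemma rangeL_nil : Λ.rangeL ([] : List A) = Set.univ := by
  rw [Λ.rangeL_eq, Λ.relRange_nil]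

lemma mem_relRange {X : Set V} {a : List A} (ha : a ≠ []) {v : V} :
    v ∈ Λ.relRange X a ↔ ∃ (l : List Ed) (h : l ≠ []),
      List.Chain' (fun e f => Λ.rng e = Λ.src f) l ∧ l.map Λ.lab = a ∧
      Λ.src (l.head h) ∈ X ∧ Λ.rng (l.getLast h) = v := by
  rw [Λ.relRange_def, if_neg ha]; rfl

lemma relRange_mono {X Y : Set V} (h : X ⊆ Y) (a : List A) :
    Λ.relRange X a ⊆ Λ.relRange Y a := by
  by_cases ha : a = []
  · subst ha; rw [Λ.relRange_nil, Λ.relRange_nil]; exact h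
  · intro v hv
    rw [Λ.mem_relRange ha] at hv ⊢
    obtain ⟨l, hl, hc, hm, hs, hr⟩ := hv
    exact ⟨l, hl, hc, hm, h hs, hr⟩

lemma nonempty_of_relRange {X : Set V} {a : List A} (h : (Λ.relRange X a).Nonempty) :
    X.Nonempty := by
  by_cases ha : a = []
  · subst ha; rwa [Λ.relRange_nil] at h
  · obtain ⟨v, hv⟩ := h
    rw [Λ.mem_relRange ha] at hv
    obtain ⟨l, hl, _, _, hs, _⟩ := hv
    exact ⟨_, hs⟩

lemma relRange_comp (X : Set V) (a b : List A) :
    Λ.relRange (Λ.relRange X a) b = Λ.relRange X (a ++ b) := by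
  by_cases ha : a = []
  · subst ha; rw [Λ.relRange_nil]; rfl
  by_cases hb : b = []
  · subst hb; rw [Λ.relRange_nil, List.append_nil]
  have hab : a ++ b ≠ [] := by simp [ha]
  ext v
  rw [Λ.mem_relRange hb, Λ.mem_relRange hab]
  constructor
  · rintro ⟨l₂, hl₂, hc₂, hm₂, hs₂, hr₂⟩
    rw [Λ.mem_relRange ha] at hs₂
    obtain ⟨l₁, hl₁, hc₁, hm₁, hs₁, hr₁⟩ := hs₂
    have hl : l₁ ++ l₂ ≠ [] := by simp [hl₁]
    refine ⟨l₁ ++ l₂, hl, ?_, by simp [hm₁, hm₂], ?_, ?_⟩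
    · show List.IsChain _ _
      rw [List.isChain_append]
      refine ⟨hc₁, hc₂, ?_⟩
      intro x hx y hy
      rw [List.getLast?_eq_getLast hl₁, Option.mem_some_iff] at hx
      rw [List.head?_eq_head hl₂, Option.mem_some_iff] at hy
      subst hx; subst hy
      exact hr₁
    · rw [List.head_append_of_ne_nil hl₁]; exact hs₁
    · rw [List.getLast_append_of_right_ne_nil l₁ l₂ hl₂]; exact hr₂
  · rintro ⟨l, hl, hc, hm, hs, hr⟩
    have hlen : l.length = a.length + b.length := by
      have := congrArg List.length hm
      simpa using this
    have halen : a.length ≤ l.length := by omega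
    have hl₁ : l.take a.length ≠ [] := by
      intro h0
      have := congrArg List.length h0
      simp only [List.length_take, List.length_nil] at this
      have : a.length = 0 := by omega
      exact ha (List.length_eq_zero_iff.mp this)
    have hl₂ : l.drop a.length ≠ [] := by
      intro h0
      have := congrArg List.length h0
      simp only [List.length_drop, List.length_nil] at this
      have hb0 : b.length = 0 := by omega
      exact hb (List.length_eq_zero_iff.mp hb0)
    have hsplit : l.take a.length ++ l.drop a.length = l := List.take_append_drop _ _
    have hm₁ : (l.take a.length).map Λ.lab = a := by
      rw [List.map_take, hm, List.take_left' rfl]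
    have hm₂ : (l.drop a.length).map Λ.lab = b := by
      rw [List.map_drop, hm, List.drop_left' rfl]
    have hc' : List.Chain' (fun e f => Λ.rng e = Λ.src f) (l.take a.length ++ l.drop a.length) := by
      rw [hsplit]; exact hc
    change List.IsChain _ _ at hc'
    rw [List.isChain_append] at hc'
    obtain ⟨hc₁, hc₂, hconn⟩ := hc'
    have hmid : Λ.rng ((l.take a.length).getLast hl₁) = Λ.src ((l.drop a.length).head hl₂) := by
      apply hconn
      · rw [List.getLast?_eq_getLast hl₁, Option.mem_some_iff]
      · rw [List.head?_eq_head hl₂, Option.mem_some_iff]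
    refine ⟨l.drop a.length, hl₂, hc₂, hm₂, ?_, ?_⟩
    · rw [Λ.mem_relRange ha]
      refine ⟨l.take a.length, hl₁, hc₁, hm₁, ?_, hmid⟩
      have : (l.take a.length ++ l.drop a.length).head (by rw [hsplit]; exact hl) = l.head hl := by
        congr 1
      rw [List.head_append_of_ne_nil hl₁] at this
      rw [this]; exact hs
    · have : (l.take a.length ++ l.drop a.length).getLast (by rw [hsplit]; exact hl) = l.getLast hl := by
        congr 1
      rw [List.getLast_append_of_right_ne_nil _ _ hl₂] at this
      rw [this]; exact hr

lemma relRange_rangeL (a b : List A) : Λ.relRange (Λ.rangeL a) b = Λ.rangeL (a ++ b) :=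
  Λ.relRange_comp Set.univ a b

lemma rangeL_append_subset (a b : List A) : Λ.rangeL (a ++ b) ⊆ Λ.rangeL b := by
  rw [← Λ.relRange_rangeL]
  exact (Λ.relRange_mono (Set.subset_univ _) b).trans (le_of_eq rfl)

lemma isPathLabel_take {x y : List A} (h : Λ.IsPathLabel (x ++ y)) (hx : x ≠ []) :
    Λ.IsPathLabel x := by
  obtain ⟨l, hl, hc, hm⟩ := h
  have hlen : l.length = x.length + y.length := by
    have := congrArg List.length hm; simpa using this
  refine ⟨l.take x.length, ?_, ?_, ?_⟩
  · intro h0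
    have := congrArg List.length h0
    simp only [List.length_take, List.length_nil] at this
    have : x.length = 0 := by omega
    exact hx (List.length_eq_zero_iff.mp this)
  · have hc' : List.Chain' (fun e f => Λ.rng e = Λ.src f) (l.take x.length ++ l.drop x.length) := by
      rw [List.take_append_drop]; exact hc
    exact (List.isChain_append.mp hc').1
  · rw [List.map_take, hm, List.take_left' rfl]

lemma isPathLabel_drop {x y : List A} (h : Λ.IsPathLabel (x ++ y)) (hy : y ≠ []) :
    Λ.IsPathLabel y := by
  obtain ⟨l, hl, hc, hm⟩ := h
  have hlen : l.length = x.length + y.length := by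
    have := congrArg List.length hm; simpa using this
  refine ⟨l.drop x.length, ?_, ?_, ?_⟩
  · intro h0
    have := congrArg List.length h0
    simp only [List.length_drop, List.length_nil] at this
    have : y.length = 0 := by omega
    exact hy (List.length_eq_zero_iff.mp this)
  · have hc' : List.Chain' (fun e f => Λ.rng e = Λ.src f) (l.take x.length ++ l.drop x.length) := by
      rw [List.take_append_drop]; exact hc
    exact (List.isChain_append.mp hc').2.1
  · rw [List.map_drop, hm, List.drop_left' rfl]

lemma lstar_nil : ([] : List A) ∈ Λ.LStar := Or.inl rfl

lemma lstar_of_subset_range {D : Set V} {u : List A} (h : D ⊆ Λ.rangeL u)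
    (hne : D.Nonempty) : u ∈ Λ.LStar := by
  by_cases hu : u = []
  · subst hu; exact Λ.lstar_nil
  · obtain ⟨v, hv⟩ := hne
    have := h hv
    rw [Λ.rangeL_eq, Λ.mem_relRange hu] at this
    obtain ⟨l, hl, hc, hm, -, -⟩ := this
    exact Or.inr ⟨l, hl, hc, hm⟩

lemma lstar_append_left {x y : List A} (h : (x ++ y) ∈ Λ.LStar) : x ∈ Λ.LStar := by
  by_cases hx : x = []
  · subst hx; exact Λ.lstar_nil
  · rcases h with h | h
    · exact absurd h (by simp [hx])
    · exact Or.inr (Λ.isPathLabel_take h hx)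

lemma lstar_append_right {x y : List A} (h : (x ++ y) ∈ Λ.LStar) : y ∈ Λ.LStar := by
  by_cases hy : y = []
  · subst hy; exact Λ.lstar_nil
  · rcases h with h | h
    · exact absurd h (by simp [hy])
    · exact Or.inr (Λ.isPathLabel_drop h hy)

lemma lstar_prefix {x y : List A} (h : y ∈ Λ.LStar) (hp : x <+: y) : x ∈ Λ.LStar := by
  obtain ⟨t, rfl⟩ := hp
  exact Λ.lstar_append_left h

end RangeLemmas

end LblSp
namespace LblSp

section FilterLemmas

variable {V : Type u} {Ed : Type v} {A : Type w} (Λ : LblSp V Ed A)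

lemma tmul_mk (α' β' γ' δ' : List A) (X' Y' : Set V) :
    Λ.tmul (Tr.mk α' X' β') (Tr.mk γ' Y' δ') =
      if β' <+: γ' ∧ (Λ.relRange X' (γ'.drop β'.length) ∩ Y').Nonempty then
        Tr.mk (α' ++ γ'.drop β'.length) (Λ.relRange X' (γ'.drop β'.length) ∩ Y') δ'
      else if γ' <+: β' ∧ (X' ∩ Λ.relRange Y' (β'.drop γ'.length)).Nonempty then
        Tr.mk α' (X' ∩ Λ.relRange Y' (β'.drop γ'.length)) (δ' ++ β'.drop γ'.length)
      else Tr.zero := by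
  unfold LblSp.tmul
  rfl

lemma tmul_mk_zero (α' β' : List A) (X' : Set V) :
    Λ.tmul (Tr.mk α' X' β') Tr.zero = Tr.zero := by
  unfold LblSp.tmul; rfl

lemma mem_ESet_mk {u : List A} {C : Set V} (hu : u ∈ Λ.LStar) (hC : C ∈ Λ.Aset u)
    (hne : C.Nonempty) : Tr.mk u C u ∈ Λ.ESet :=
  Or.inr ⟨u, C, rfl, hu, hC, hne⟩

lemma mk_mem_ESet_elim {u : List A} {C : Set V} (h : Tr.mk u C u ∈ Λ.ESet) :
    u ∈ Λ.LStar ∧ C ∈ Λ.Aset u ∧ C.Nonempty := by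
  rcases h with h | ⟨u', C', heq, hu, hC, hne⟩
  · exact absurd h (by simp)
  · rw [Tr.mk.injEq] at heq
    obtain ⟨rfl, rfl, -⟩ := heq
    exact ⟨hu, hC, hne⟩

lemma shape_of_mem_filter {ξ : Set (Tr V A)} (hξ : Λ.IsFilterES ξ) {t : Tr V A}
    (ht : t ∈ ξ) :
    ∃ u C, t = Tr.mk u C u ∧ u ∈ Λ.LStar ∧ C ∈ Λ.Aset u ∧ C.Nonempty := by
  obtain ⟨hE, hnz⟩ := hξ.2.1 t ht
  rcases hE with h | ⟨u, C, heq, hu, hC, hne⟩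
  · exact absurd h hnz
  · exact ⟨u, C, heq, hu, hC, hne⟩

lemma mk_mem_filter_elim {ξ : Set (Tr V A)} (hξ : Λ.IsFilterES ξ) {u : List A}
    {C : Set V} (h : Tr.mk u C u ∈ ξ) :
    u ∈ Λ.LStar ∧ C ∈ Λ.Aset u ∧ C.Nonempty := by
  obtain ⟨u', C', heq, hu, hC, hne⟩ := Λ.shape_of_mem_filter hξ h
  rw [Tr.mk.injEq] at heq
  obtain ⟨rfl, rfl, -⟩ := heq
  exact ⟨hu, hC, hne⟩

lemma comparable_of_mem {ξ : Set (Tr V A)} (hξ : Λ.IsFilterES ξ) {u v : List A}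
    {Y Z : Set V} (hu : Tr.mk u Y u ∈ ξ) (hv : Tr.mk v Z v ∈ ξ) :
    u <+: v ∨ v <+: u := by
  by_contra hcon
  push_neg at hcon
  have hm := hξ.2.2.1 _ hu _ hv
  have hnz := (hξ.2.1 _ hm).2
  rw [Λ.tmul_mk, if_neg (fun h => hcon.1 h.1), if_neg (fun h => hcon.2 h.1)] at hnz
  exact hnz rfl

lemma filter_mul_level {ξ : Set (Tr V A)} (hξ : Λ.IsFilterES ξ) {u t : List A}
    {D D' : Set V} (hE : Tr.mk u D u ∈ ξ) (hE' : Tr.mk (u ++ t) D' (u ++ t) ∈ ξ) :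
    Tr.mk (u ++ t) (Λ.relRange D t ∩ D') (u ++ t) ∈ ξ := by
  have hρ : (u ++ t).drop u.length = t := List.drop_left
  have hρ2 : u.drop (u ++ t).length = [] := by
    apply List.drop_eq_nil_of_le
    simp
  have hm := hξ.2.2.1 _ hE _ hE'
  have hnz := (hξ.2.1 _ hm).2
  rw [Λ.tmul_mk, hρ, hρ2, Λ.relRange_nil, List.append_nil] at hm hnz
  by_cases h1 : u <+: u ++ t ∧ (Λ.relRange D t ∩ D').Nonempty
  · rwa [if_pos h1] at hm
  · rw [if_neg h1] at hm hnz
    by_cases h2 : u ++ t <+: u ∧ (D ∩ D').Nonempty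
    · have hlen := h2.1.length_le
      simp only [List.length_append] at hlen
      have ht : t = [] := List.length_eq_zero_iff.mp (by omega)
      subst ht
      refine absurd ⟨by simp, ?_⟩ h1
      rw [Λ.relRange_nil]
      exact h2.2
    · rw [if_neg h2] at hnz
      exact absurd rfl hnz

end FilterLemmas

end LblSp
namespace LblSp

section FilterLemmas2

variable {V : Type u} {Ed : Type v} {A : Type w} (Λ : LblSp V Ed A)

lemma filter_up {ξ : Set (Tr V A)} (hξ : Λ.IsFilterES ξ) {u : List A} {D C : Set V}
    (hp : Tr.mk u D u ∈ ξ) (hDC : D ⊆ C) (hC : C ∈ Λ.Aset u) : Tr.mk u C u ∈ ξ := by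
  obtain ⟨huL, hDA, hDne⟩ := Λ.mk_mem_filter_elim hξ hp
  apply hξ.2.2.2 _ hp _ (Λ.mem_ESet_mk huL hC (hDne.mono hDC))
  rw [Λ.tmul_mk, List.drop_length, Λ.relRange_nil]
  rw [if_pos ⟨List.prefix_refl u, by
    rw [Set.inter_eq_self_of_subset_left hDC]; exact hDne⟩]
  rw [List.append_nil, Set.inter_eq_self_of_subset_left hDC]

lemma filter_prefix_up (hW : Λ.IsWLR) {ξ : Set (Tr V A)} (hξ : Λ.IsFilterES ξ)
    {v t : List A} {D C : Set V} (hp : Tr.mk (v ++ t) D (v ++ t) ∈ ξ)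
    (hC : C ∈ Λ.𝒜) (hD : D ⊆ Λ.relRange C t) :
    Tr.mk v (C ∩ Λ.rangeL v) v ∈ ξ := by
  obtain ⟨huL, hDA, hDne⟩ := Λ.mk_mem_filter_elim hξ hp
  have hvL : v ∈ Λ.LStar := Λ.lstar_append_left huL
  have hC'A : C ∩ Λ.rangeL v ∈ Λ.𝒜 := by
    by_cases hv : v = []
    · subst hv; rw [Λ.rangeL_nil, Set.inter_univ]; exact hC
    · exact hW.toIsLS.inter_mem C hC _ (hW.toIsLS.range_mem v hvL hv)
  have hD' : D ⊆ Λ.relRange (C ∩ Λ.rangeL v) t := by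
    by_cases hv : v = []
    · subst hv; rw [Λ.rangeL_nil, Set.inter_univ]; exact hD
    by_cases ht : t = []
    · subst ht
      rw [Λ.relRange_nil] at hD ⊢
      rw [List.append_nil] at hDA
      exact Set.subset_inter hD hDA.2
    · have htL : t ∈ Λ.LStar := Λ.lstar_append_right huL
      rw [hW.wlr C hC _ (hW.toIsLS.range_mem v hvL hv) t htL ht]
      refine Set.subset_inter hD ?_
      rw [Λ.relRange_rangeL]
      exact hDA.2
  have hC'ne : (C ∩ Λ.rangeL v).Nonempty := Λ.nonempty_of_relRange (hDne.mono hD')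
  have hq : Tr.mk v (C ∩ Λ.rangeL v) v ∈ Λ.ESet :=
    Λ.mem_ESet_mk hvL ⟨hC'A, Set.inter_subset_right⟩ hC'ne
  by_cases ht : t = []
  · subst ht
    rw [List.append_nil] at hp
    rw [Λ.relRange_nil] at hD'
    exact Λ.filter_up hξ hp hD' ⟨hC'A, Set.inter_subset_right⟩
  · apply hξ.2.2.2 _ hp _ hq
    rw [Λ.tmul_mk, List.drop_left]
    have hnc : ¬ ((v ++ t) <+: v ∧
        (Λ.relRange D (v.drop (v ++ t).length) ∩ (C ∩ Λ.rangeL v)).Nonempty) := by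
      rintro ⟨hpre, -⟩
      have := hpre.length_le
      simp only [List.length_append] at this
      exact ht (List.length_eq_zero_iff.mp (by omega))
    rw [if_neg hnc, if_pos ⟨List.prefix_append v t, by
      rw [Set.inter_eq_self_of_subset_left hD']; exact hDne⟩]
    rw [Set.inter_eq_self_of_subset_left hD']

lemma filter_exists_prefix (hW : Λ.IsWLR) {ξ : Set (Tr V A)} (hξ : Λ.IsFilterES ξ)
    {u v : List A} {D : Set V} (hp : Tr.mk u D u ∈ ξ) (hv : v <+: u) (hvne : v ≠ []) :
    ∃ B, Tr.mk v B v ∈ ξ := by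
  obtain ⟨t, rfl⟩ := hv
  obtain ⟨huL, hDA, hDne⟩ := Λ.mk_mem_filter_elim hξ hp
  have hvL : v ∈ Λ.LStar := Λ.lstar_append_left huL
  refine ⟨_, Λ.filter_prefix_up hW hξ hp (hW.toIsLS.range_mem v hvL hvne) ?_⟩
  rw [Λ.relRange_rangeL]
  exact hDA.2

end FilterLemmas2

end LblSp
namespace LblSp

section HcutLemmas

variable {V : Type u} {Ed : Type v} {A : Type w} (Λ : LblSp V Ed A)

lemma Hcut_def (a : List A) (ξ : Set (Tr V A)) : Λ.Hcut a ξ =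
    if a = [] then ξ
    else {t | ∃ δ B, t = Tr.mk δ B δ ∧ B ∈ Λ.Aset δ ∧
      ∃ D, Tr.mk (a ++ δ) D (a ++ δ) ∈ ξ ∧ D ⊆ B} := by
  unfold LblSp.Hcut; rfl

lemma Hcut_nil (ξ : Set (Tr V A)) : Λ.Hcut [] ξ = ξ := by
  rw [Λ.Hcut_def, if_pos rfl]

lemma mem_Hcut_iff {a : List A} (ha : a ≠ []) {ξ : Set (Tr V A)} {t : Tr V A} :
    t ∈ Λ.Hcut a ξ ↔ ∃ δ B, t = Tr.mk δ B δ ∧ B ∈ Λ.Aset δ ∧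
      ∃ D, Tr.mk (a ++ δ) D (a ++ δ) ∈ ξ ∧ D ⊆ B := by
  rw [Λ.Hcut_def, if_neg ha]; rfl

lemma mk_mem_Hcut_iff {a : List A} (ha : a ≠ []) {ξ : Set (Tr V A)} {δ : List A}
    {B : Set V} :
    Tr.mk δ B δ ∈ Λ.Hcut a ξ ↔ B ∈ Λ.Aset δ ∧
      ∃ D, Tr.mk (a ++ δ) D (a ++ δ) ∈ ξ ∧ D ⊆ B := by
  rw [Λ.mem_Hcut_iff ha]
  constructor
  · rintro ⟨δ', B', heq, h1, h2⟩
    rw [Tr.mk.injEq] at heq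
    obtain ⟨rfl, rfl, -⟩ := heq
    exact ⟨h1, h2⟩
  · rintro ⟨h1, h2⟩
    exact ⟨δ, B, rfl, h1, h2⟩

lemma Hcut_filter (hW : Λ.IsWLR) {ξ : Set (Tr V A)} (hξ : Λ.IsFilterES ξ) {a : List A}
    (ha : a ≠ []) {Y₀ : Set V} (hwit : Tr.mk a Y₀ a ∈ ξ) :
    Λ.IsFilterES (Λ.Hcut a ξ) := by
  obtain ⟨haL, hYA, hYne⟩ := Λ.mk_mem_filter_elim hξ hwit
  refine ⟨⟨Tr.mk [] Y₀ [], ?_⟩, ?_, ?_, ?_⟩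
  · rw [Λ.mk_mem_Hcut_iff ha]
    exact ⟨⟨hYA.1, by rw [Λ.rangeL_nil]; exact Set.subset_univ _⟩,
      Y₀, by rw [List.append_nil]; exact hwit, subset_rfl⟩
  · intro t ht
    rw [Λ.mem_Hcut_iff ha] at ht
    obtain ⟨δ, B, rfl, hBA, D, hD, hDB⟩ := ht
    obtain ⟨hL, hDA, hDne⟩ := Λ.mk_mem_filter_elim hξ hD
    have hδL : δ ∈ Λ.LStar := Λ.lstar_append_right hL
    exact ⟨Λ.mem_ESet_mk hδL hBA (hDne.mono hDB), by simp⟩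
  · intro p hp q hq
    rw [Λ.mem_Hcut_iff ha] at hp hq
    obtain ⟨δ, B, rfl, hBA, D, hD, hDB⟩ := hp
    obtain ⟨δ', B', rfl, hB'A, D', hD', hD'B'⟩ := hq
    obtain ⟨hLδ, hDA, hDne⟩ := Λ.mk_mem_filter_elim hξ hD
    obtain ⟨hLδ', hD'A, hD'ne⟩ := Λ.mk_mem_filter_elim hξ hD'
    have hcomp : δ <+: δ' ∨ δ' <+: δ := by
      rcases Λ.comparable_of_mem hξ hD hD' with h | h
      · exact Or.inl ((List.prefix_append_right_inj a).mp h)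
      · exact Or.inr ((List.prefix_append_right_inj a).mp h)
    by_cases hpre : δ <+: δ'
    · obtain ⟨t, rfl⟩ := hpre
      have hE : Tr.mk ((a ++ δ) ++ t) (Λ.relRange D t ∩ D') ((a ++ δ) ++ t) ∈ ξ := by
        apply Λ.filter_mul_level hξ hD
        rw [List.append_assoc]; exact hD'
      obtain ⟨-, hEA, hEne⟩ := Λ.mk_mem_filter_elim hξ hE
      have htL : t ∈ Λ.LStar :=
        Λ.lstar_append_right (x := a ++ δ) (by rw [List.append_assoc]; exact hLδ')
      have hsub : Λ.relRange D t ∩ D' ⊆ Λ.relRange B t ∩ B' :=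
        Set.inter_subset_inter (Λ.relRange_mono hDB t) hD'B'
      rw [Λ.tmul_mk, List.drop_left, if_pos ⟨List.prefix_append δ t, hEne.mono hsub⟩]
      rw [Λ.mk_mem_Hcut_iff ha]
      refine ⟨⟨hW.toIsLS.inter_mem _ (hW.toIsLS.relRange_mem B hBA.1 t htL) _ hB'A.1,
        Set.inter_subset_right.trans hB'A.2⟩, Λ.relRange D t ∩ D', ?_, hsub⟩
      rw [← List.append_assoc]; exact hE
    · have hpre' : δ' <+: δ := hcomp.resolve_left hpre
      obtain ⟨t, rfl⟩ := hpre'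
      have ht : t ≠ [] := by
        rintro rfl
        exact hpre (by simp)
      have hE : Tr.mk ((a ++ δ') ++ t) (Λ.relRange D' t ∩ D) ((a ++ δ') ++ t) ∈ ξ := by
        apply Λ.filter_mul_level hξ hD'
        rw [List.append_assoc]; exact hD
      obtain ⟨-, hEA, hEne⟩ := Λ.mk_mem_filter_elim hξ hE
      have htL : t ∈ Λ.LStar :=
        Λ.lstar_append_right (x := a ++ δ') (by rw [List.append_assoc]; exact hLδ)
      have hsub : Λ.relRange D' t ∩ D ⊆ B ∩ Λ.relRange B' t := by
        rw [Set.inter_comm]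
        exact Set.inter_subset_inter hDB (Λ.relRange_mono hD'B' t)
      have hnc : ¬ ((δ' ++ t) <+: δ' ∧
          (Λ.relRange B (δ'.drop (δ' ++ t).length) ∩ B').Nonempty) := by
        rintro ⟨hp2, -⟩
        have := hp2.length_le
        simp only [List.length_append] at this
        exact ht (List.length_eq_zero_iff.mp (by omega))
      rw [Λ.tmul_mk, List.drop_left, if_neg hnc,
        if_pos ⟨List.prefix_append δ' t, hEne.mono hsub⟩]
      rw [Λ.mk_mem_Hcut_iff ha]
      refine ⟨⟨hW.toIsLS.inter_mem _ hBA.1 _ (hW.toIsLS.relRange_mem B' hB'A.1 t htL),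
        Set.inter_subset_left.trans hBA.2⟩, Λ.relRange D' t ∩ D, ?_, hsub⟩
      rw [← List.append_assoc]; exact hE
  · intro p hp q hqE hqm
    rw [Λ.mem_Hcut_iff ha] at hp
    obtain ⟨δ, B, rfl, hBA, D, hD, hDB⟩ := hp
    obtain ⟨hLaδ, hDA, hDne⟩ := Λ.mk_mem_filter_elim hξ hD
    rcases hqE with hq0 | ⟨ε, C, rfl, hεL, hCA, hCne⟩
    · subst hq0
      rw [Λ.tmul_mk_zero] at hqm
      exact absurd hqm (by simp)
    rw [Λ.tmul_mk] at hqm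
    by_cases h1 : δ <+: ε ∧ (Λ.relRange B (ε.drop δ.length) ∩ C).Nonempty
    · rw [if_pos h1] at hqm
      rw [Tr.mk.injEq] at hqm
      obtain ⟨-, h₂, h₃⟩ := hqm
      subst h₃
      rw [List.drop_length, Λ.relRange_nil] at h₂
      have hBC : B ⊆ C := by rw [← h₂]; exact Set.inter_subset_right
      rw [Λ.mk_mem_Hcut_iff ha]
      exact ⟨hCA, D, hD, hDB.trans hBC⟩
    · rw [if_neg h1] at hqm
      by_cases h2 : ε <+: δ ∧ (B ∩ Λ.relRange C (δ.drop ε.length)).Nonempty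
      · rw [if_pos h2] at hqm
        rw [Tr.mk.injEq] at hqm
        obtain ⟨-, h₂, -⟩ := hqm
        have hBrel : B ⊆ Λ.relRange C (δ.drop ε.length) := by
          rw [← h₂]; exact Set.inter_subset_right
        obtain ⟨t, rfl⟩ := h2.1
        rw [List.drop_left] at hBrel
        have hup := Λ.filter_prefix_up hW hξ (v := a ++ ε) (t := t)
          (by rw [List.append_assoc]; exact hD) hCA.1 (hDB.trans hBrel)
        rw [Λ.mk_mem_Hcut_iff ha]
        exact ⟨hCA, _, hup, Set.inter_subset_left⟩
      · rw [if_neg h2] at hqm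
        exact absurd hqm (by simp)

lemma Hcut_comp (hW : Λ.IsWLR) {ξ : Set (Tr V A)} (hξ : Λ.IsFilterES ξ) {a b : List A}
    (ha : a ≠ []) (hb : b ≠ []) :
    Λ.Hcut b (Λ.Hcut a ξ) = Λ.Hcut (a ++ b) ξ := by
  have hab : a ++ b ≠ [] := by simp [ha]
  ext t
  rw [Λ.mem_Hcut_iff hb, Λ.mem_Hcut_iff hab]
  constructor
  · rintro ⟨δ, B, rfl, hB, D, hDmem, hDB⟩
    rw [Λ.mk_mem_Hcut_iff ha] at hDmem
    obtain ⟨hDA, D₁, hD₁, hD₁D⟩ := hDmem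
    refine ⟨δ, B, rfl, hB, D₁, ?_, hD₁D.trans hDB⟩
    rw [List.append_assoc]; exact hD₁
  · rintro ⟨δ, B, rfl, hB, D, hD, hDB⟩
    have hD' : Tr.mk (a ++ (b ++ δ)) D (a ++ (b ++ δ)) ∈ ξ := by
      rw [← List.append_assoc]; exact hD
    obtain ⟨hL, hDA, hDne⟩ := Λ.mk_mem_filter_elim hξ hD'
    have hbδL : b ++ δ ∈ Λ.LStar := Λ.lstar_append_right hL
    have hbδ : b ++ δ ≠ [] := by simp [hb]
    have hDsub : D ⊆ Λ.rangeL (b ++ δ) := hDA.2.trans (Λ.rangeL_append_subset a (b ++ δ))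
    refine ⟨δ, B, rfl, hB, Λ.rangeL (b ++ δ) ∩ B, ?_, Set.inter_subset_right⟩
    rw [Λ.mk_mem_Hcut_iff ha]
    exact ⟨⟨hW.toIsLS.inter_mem _ (hW.toIsLS.range_mem _ hbδL hbδ) _ hB.1,
      Set.inter_subset_left⟩, D, hD', Set.subset_inter hDsub hDB⟩

lemma sigma_single {ξ : Set (Tr V A)} (hξ : Λ.IsFilterES ξ) {c : A} {Y : Set V}
    (hY : Tr.mk [c] Y [c] ∈ ξ) : Λ.sigmaMap ξ = Λ.Hcut [c] ξ := by
  have h : ∃ a B, Tr.mk [a] B [a] ∈ ξ := ⟨c, Y, hY⟩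
  have hc : h.choose = c := by
    obtain ⟨B, hB⟩ := h.choose_spec
    rcases Λ.comparable_of_mem hξ hB hY with hp | hp
    · obtain ⟨t, ht⟩ := hp
      simpa using congrArg (fun l => l.head?) ht
    · obtain ⟨t, ht⟩ := hp
      have := congrArg (fun l => l.head?) ht
      simpa using this.symm
  unfold LblSp.sigmaMap
  rw [dif_pos h, hc]

lemma sigma_iter (hW : Λ.IsWLR) {ξ : Set (Tr V A)} (hξ : Λ.IsFilterES ξ) {α : List A}
    {Y : Set V} (hY : Tr.mk α Y α ∈ ξ) :
    (Λ.sigmaMap)^[α.length] ξ = Λ.Hcut α ξ := by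
  induction α generalizing ξ Y with
  | nil => rw [List.length_nil, Function.iterate_zero_apply, Λ.Hcut_nil]
  | cons c α₂ ih =>
    obtain ⟨hαL, hYA, hYne⟩ := Λ.mk_mem_filter_elim hξ hY
    have hsing : Tr.mk [c] (Λ.rangeL [c] ∩ Λ.rangeL [c]) [c] ∈ ξ := by
      apply Λ.filter_prefix_up hW hξ (v := [c]) (t := α₂) hY
      · exact hW.toIsLS.range_mem [c] (Λ.lstar_append_left (x := [c]) (y := α₂) hαL) (by simp)
      · rw [Λ.relRange_rangeL]; exact hYA.2
    have h1 : Λ.sigmaMap ξ = Λ.Hcut [c] ξ := Λ.sigma_single hξ hsing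
    have hξ₁ : Λ.IsFilterES (Λ.Hcut [c] ξ) := Λ.Hcut_filter hW hξ (by simp) hsing
    have hmem₂ : Tr.mk α₂ Y α₂ ∈ Λ.Hcut [c] ξ := by
      rw [Λ.mk_mem_Hcut_iff (a := [c]) (by simp)]
      exact ⟨⟨hYA.1, hYA.2.trans (Λ.rangeL_append_subset [c] α₂)⟩, Y, hY, subset_rfl⟩
    rw [List.length_cons, Function.iterate_succ_apply, h1, ih hξ₁ hmem₂]
    by_cases h2 : α₂ = []
    · subst h2; rw [Λ.Hcut_nil]
    · exact Λ.Hcut_comp hW hξ (a := [c]) (b := α₂) (by simp) h2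

end HcutLemmas

end LblSp
namespace LblSp

section InjLemmas

variable {V : Type u} {Ed : Type v} {A : Type w} (Λ : LblSp V Ed A)

lemma Hcut_subset (hW : Λ.IsWLR) {ξ ξ' : Set (Tr V A)} (hξ : Λ.IsFilterES ξ)
    (hξ' : Λ.IsFilterES ξ') {α : List A} {X : Set V}
    (hXξ : Tr.mk α X α ∈ ξ) (hXξ' : Tr.mk α X α ∈ ξ')
    (hH : Λ.Hcut α ξ = Λ.Hcut α ξ') : ξ ⊆ ξ' := by
  by_cases hα : α = []
  · subst hα; rw [Λ.Hcut_nil, Λ.Hcut_nil] at hH; exact hH.subset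
  intro t ht
  obtain ⟨u, C, rfl, huL, hCA, hCne⟩ := Λ.shape_of_mem_filter hξ ht
  obtain ⟨hαL, hXA, hXne⟩ := Λ.mk_mem_filter_elim hξ hXξ
  rcases Λ.comparable_of_mem hξ ht hXξ with hp | hp
  · obtain ⟨t₀, rfl⟩ := hp
    have hE : Tr.mk (u ++ t₀) (Λ.relRange C t₀ ∩ X) (u ++ t₀) ∈ ξ :=
      Λ.filter_mul_level hξ ht hXξ
    have ht₀L : t₀ ∈ Λ.LStar := Λ.lstar_append_right hαL
    have hEA : Λ.relRange C t₀ ∩ X ∈ Λ.𝒜 :=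
      hW.toIsLS.inter_mem _ (hW.toIsLS.relRange_mem C hCA.1 t₀ ht₀L) _ hXA.1
    have h1 : Tr.mk [] (Λ.relRange C t₀ ∩ X) [] ∈ Λ.Hcut (u ++ t₀) ξ := by
      rw [Λ.mk_mem_Hcut_iff hα]
      exact ⟨⟨hEA, by rw [Λ.rangeL_nil]; exact Set.subset_univ _⟩,
        _, by rw [List.append_nil]; exact hE, subset_rfl⟩
    rw [hH, Λ.mk_mem_Hcut_iff hα] at h1
    obtain ⟨-, D', hD', hD'E⟩ := h1
    rw [List.append_nil] at hD'
    have h2 : Tr.mk (u ++ t₀) (Λ.relRange C t₀ ∩ X) (u ++ t₀) ∈ ξ' :=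
      Λ.filter_up hξ' hD' hD'E ⟨hEA, Set.inter_subset_right.trans hXA.2⟩
    have h3 := Λ.filter_prefix_up hW hξ' h2 hCA.1 Set.inter_subset_left
    rwa [Set.inter_eq_self_of_subset_left hCA.2] at h3
  · obtain ⟨t₀, rfl⟩ := hp
    have h1 : Tr.mk t₀ C t₀ ∈ Λ.Hcut α ξ := by
      rw [Λ.mk_mem_Hcut_iff hα]
      exact ⟨⟨hCA.1, hCA.2.trans (Λ.rangeL_append_subset α t₀)⟩, C, ht, subset_rfl⟩
    rw [hH, Λ.mk_mem_Hcut_iff hα] at h1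
    obtain ⟨-, D', hD', hD'C⟩ := h1
    exact Λ.filter_up hξ' hD' hD'C hCA

lemma Hcut_inj (hW : Λ.IsWLR) {ξ ξ' : Set (Tr V A)} (hξ : Λ.IsFilterES ξ)
    (hξ' : Λ.IsFilterES ξ') {α : List A} {X : Set V}
    (hXξ : Tr.mk α X α ∈ ξ) (hXξ' : Tr.mk α X α ∈ ξ')
    (hH : Λ.Hcut α ξ = Λ.Hcut α ξ') : ξ = ξ' :=
  Set.Subset.antisymm (Λ.Hcut_subset hW hξ hξ' hXξ hXξ' hH)
    (Λ.Hcut_subset hW hξ' hξ hXξ' hXξ hH.symm)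

lemma Hcut_level_exists_iff (hW : Λ.IsWLR) {ξ : Set (Tr V A)} (hξ : Λ.IsFilterES ξ)
    (β δ : List A) (hδ : δ ≠ []) :
    (∃ B, Tr.mk δ B δ ∈ Λ.Hcut β ξ) ↔ ∃ D, Tr.mk (β ++ δ) D (β ++ δ) ∈ ξ := by
  by_cases hβ : β = []
  · subst hβ; rw [Λ.Hcut_nil]; exact Iff.rfl
  constructor
  · rintro ⟨B, hB⟩
    rw [Λ.mk_mem_Hcut_iff hβ] at hB
    obtain ⟨-, D, hD, -⟩ := hB
    exact ⟨D, hD⟩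
  · rintro ⟨D, hD⟩
    obtain ⟨hL, hDA, hDne⟩ := Λ.mk_mem_filter_elim hξ hD
    refine ⟨Λ.rangeL (β ++ δ), ?_⟩
    rw [Λ.mk_mem_Hcut_iff hβ]
    exact ⟨⟨hW.toIsLS.range_mem _ hL (by simp [hβ]), Λ.rangeL_append_subset β δ⟩,
      D, hD, hDA.2⟩

lemma Hcut_transfer {η ξ : Set (Tr V A)} (hη : Λ.IsFilterES η) (hξ : Λ.IsFilterES ξ)
    {α β δ : List A} (hH : Λ.Hcut α η = Λ.Hcut β ξ) {C : Set V} (hCA : C ∈ Λ.𝒜)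
    (hCδ : C ⊆ Λ.rangeL δ) (hCα : C ⊆ Λ.rangeL (α ++ δ))
    (hmem : Tr.mk (β ++ δ) C (β ++ δ) ∈ ξ) : Tr.mk (α ++ δ) C (α ++ δ) ∈ η := by
  have h1 : Tr.mk δ C δ ∈ Λ.Hcut β ξ := by
    by_cases hβ : β = []
    · subst hβ; rw [Λ.Hcut_nil]; exact hmem
    · rw [Λ.mk_mem_Hcut_iff hβ]
      exact ⟨⟨hCA, hCδ⟩, C, hmem, subset_rfl⟩
  rw [← hH] at h1
  by_cases hα : α = []
  · subst hα
    rw [Λ.Hcut_nil] at h1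
    exact h1
  · rw [Λ.mk_mem_Hcut_iff hα] at h1
    obtain ⟨-, D, hD, hDC⟩ := h1
    exact Λ.filter_up hη hD hDC ⟨hCA, hCα⟩

lemma hasWord_wappend (hW : Λ.IsWLR) {ξ : Set (Tr V A)} (hξ : Λ.IsFilterES ξ)
    {β : List A} {X : Set V} (hβ : Tr.mk β X β ∈ ξ) {γ : Word A}
    (P : ∀ δ : List A, δ ≠ [] → ((∃ D, Tr.mk (β ++ δ) D (β ++ δ) ∈ ξ) ↔ WPrefix δ γ)) :
    Λ.HasWord ξ (wappend β γ) := by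
  intro ε hε
  constructor
  · rintro ⟨Bb, hBb⟩
    rcases Λ.comparable_of_mem hξ hBb hβ with hp | hp
    · exact wprefix_of_prefix hp
    · obtain ⟨t, rfl⟩ := hp
      by_cases ht : t = []
      · subst ht
        exact wprefix_of_prefix (by simp)
      · exact wprefix_append_iff.mpr ((P t ht).mp ⟨Bb, hBb⟩)
  · intro h
    by_cases hle : ε.length ≤ β.length
    · exact Λ.filter_exists_prefix hW hξ hβ (prefix_of_wprefix_le h hle) hε
    · push_neg at hle
      obtain ⟨hpre, htail⟩ := wprefix_drop h hle
      obtain ⟨t, rfl⟩ := hpre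
      rw [List.drop_left] at htail
      have ht : t ≠ [] := by
        rintro rfl
        simp at hle
      exact (P t ht).mpr htail

lemma inGamma_parts {η ξ : Set (Tr V A)} {m : ℤ} (h : Λ.InGamma η m ξ) :
    Λ.IsTightFilter η ∧ Λ.IsTightFilter ξ ∧ ∃ w, Λ.HasWord η w := by
  obtain ⟨a, b, γ, -, -, -, hη, hξ, -, -⟩ := h
  exact ⟨hη.1, hξ.1, _, hη.2⟩

end InjLemmas

end LblSp


namespace LblSp

variable {V : Type u} {Ed : Type v} {A : Type w} (Λ : LblSp V Ed A)

/-- Let `s = (α, X, β) ∈ S` and `eᵢ = (βδᵢ, Bᵢ, βδᵢ) ∈ E(S)` with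
`Bᵢ ⊆ r(X, δᵢ)`. Then `σ^{|α|}` is injective on `V_{ss*:f₁,…,fₙ}`, `σ^{|β|}` is
injective on `V_{s*s:e₁,…,eₙ}`, and
`Z_{s:e₁,…,eₙ} = 𝒱(V_{ss*:f₁,…,fₙ}, V_{s*s:e₁,…,eₙ}, |α|, |β|)`, where
`fᵢ = (αδᵢ, Bᵢ, αδᵢ)`. -/
theorem statement_7 (hΛ : Λ.IsNormal) (α β : List A) (X : Set V)
    (hs : Tr.mk α X β ∈ Λ.SSet) (n : ℕ) (δ : Fin n → List A) (B : Fin n → Set V)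
    (he : ∀ i, Tr.mk (β ++ δ i) (B i) (β ++ δ i) ∈ Λ.ESet)
    (hB : ∀ i, B i ⊆ Λ.relRange X (δ i)) :
    Set.InjOn (Λ.sigmaMap)^[α.length]
      (Λ.VrawGen (Λ.tmul (Tr.mk α X β) (Tr.tstar (Tr.mk α X β)))
        (List.ofFn fun i => Tr.mk (α ++ δ i) (B i) (α ++ δ i))) ∧
    Set.InjOn (Λ.sigmaMap)^[β.length]
      (Λ.VrawGen (Λ.tmul (Tr.tstar (Tr.mk α X β)) (Tr.mk α X β))
        (List.ofFn fun i => Tr.mk (β ++ δ i) (B i) (β ++ δ i))) ∧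
    Λ.ZrawGen α β (Λ.tmul (Tr.tstar (Tr.mk α X β)) (Tr.mk α X β))
        (List.ofFn fun i => Tr.mk (β ++ δ i) (B i) (β ++ δ i)) =
      Λ.VrdRaw
        (Λ.VrawGen (Λ.tmul (Tr.mk α X β) (Tr.tstar (Tr.mk α X β)))
          (List.ofFn fun i => Tr.mk (α ++ δ i) (B i) (α ++ δ i)))
        (Λ.VrawGen (Λ.tmul (Tr.tstar (Tr.mk α X β)) (Tr.mk α X β))
          (List.ofFn fun i => Tr.mk (β ++ δ i) (B i) (β ++ δ i)))
        α.length β.length := by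
  have hW : Λ.IsWLR := hΛ.toIsWLR
  have hs' : α ∈ Λ.LStar ∧ β ∈ Λ.LStar ∧ X ∈ Λ.Aset α ∧ X ∈ Λ.Aset β ∧ X.Nonempty := by
    rcases hs with h | ⟨a', X', b', heq, h1, h2, h3, h4, h5⟩
    · exact absurd h (by simp)
    · rw [Tr.mk.injEq] at heq
      obtain ⟨rfl, rfl, rfl⟩ := heq
      exact ⟨h1, h2, h3, h4, h5⟩
  obtain ⟨hαL, hβL, hXα, hXβ, hXne⟩ := hs'
  have hss : Λ.tmul (Tr.mk α X β) (Tr.tstar (Tr.mk α X β)) = Tr.mk α X α := by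
    show Λ.tmul (Tr.mk α X β) (Tr.mk β X α) = _
    rw [Λ.tmul_mk, List.drop_length, Λ.relRange_nil,
      if_pos ⟨List.prefix_refl β, by rw [Set.inter_self]; exact hXne⟩,
      List.append_nil, Set.inter_self]
  have hsts : Λ.tmul (Tr.tstar (Tr.mk α X β)) (Tr.mk α X β) = Tr.mk β X β := by
    show Λ.tmul (Tr.mk β X α) (Tr.mk α X β) = _
    rw [Λ.tmul_mk, List.drop_length, Λ.relRange_nil,
      if_pos ⟨List.prefix_refl α, by rw [Set.inter_self]; exact hXne⟩,
      List.append_nil, Set.inter_self]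
  have heB : ∀ i, (β ++ δ i) ∈ Λ.LStar ∧ B i ∈ Λ.Aset (β ++ δ i) ∧ (B i).Nonempty :=
    fun i => Λ.mk_mem_ESet_elim (he i)
  have hBδ : ∀ i, B i ⊆ Λ.rangeL (δ i) :=
    fun i => ((heB i).2.1.2).trans (Λ.rangeL_append_subset β (δ i))
  have hBα : ∀ i, B i ⊆ Λ.rangeL (α ++ δ i) := fun i => by
    refine (hB i).trans ((Λ.relRange_mono hXα.2 (δ i)).trans ?_)
    rw [Λ.relRange_rangeL]
  have hB𝒜 : ∀ i, B i ∈ Λ.𝒜 := fun i => (heB i).2.1.1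
  refine ⟨?_, ?_, ?_⟩
  · intro ξ hξm ξ' hξ'm hit
    obtain ⟨hξt, hssξ, -⟩ := hξm
    obtain ⟨hξ't, hssξ', -⟩ := hξ'm
    rw [hss] at hssξ hssξ'
    refine Λ.Hcut_inj hW hξt.1 hξ't.1 hssξ hssξ' ?_
    rw [← Λ.sigma_iter hW hξt.1 hssξ, ← Λ.sigma_iter hW hξ't.1 hssξ']
    exact hit
  · intro ξ hξm ξ' hξ'm hit
    obtain ⟨hξt, hssξ, -⟩ := hξm
    obtain ⟨hξ't, hssξ', -⟩ := hξ'm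
    rw [hsts] at hssξ hssξ'
    refine Λ.Hcut_inj hW hξt.1 hξ't.1 hssξ hssξ' ?_
    rw [← Λ.sigma_iter hW hξt.1 hssξ, ← Λ.sigma_iter hW hξ't.1 hssξ']
    exact hit
  · ext p
    obtain ⟨η, m, ξ⟩ := p
    simp only [ZrawGen, VrdRaw, VrawGen, Set.mem_setOf_eq]
    constructor
    · rintro ⟨hΓ, hm, heξ, hesξ, γ, hwη, hwξ, hHeq⟩
      obtain ⟨hηt, hξt, -⟩ := Λ.inGamma_parts hΓ
      have hXξ : Tr.mk β X β ∈ ξ := by rw [hsts] at heξ; exact heξ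
      have hXη : Tr.mk α X α ∈ η := by
        have := Λ.Hcut_transfer hηt.1 hξt.1 (δ := []) hHeq hXα.1
          (by rw [Λ.rangeL_nil]; exact Set.subset_univ _)
          (by rw [List.append_nil]; exact hXα.2)
          (by rw [List.append_nil]; exact hXξ)
        rwa [List.append_nil] at this
      refine ⟨hΓ, hm, ⟨hηt, by rw [hss]; exact hXη, ?_⟩,
        ⟨hξt, by rw [hsts]; exact hXξ, hesξ⟩, ?_⟩
      · intro f hf hfη
        rw [List.mem_ofFn] at hf
        obtain ⟨i, rfl⟩ := hf
        have := Λ.Hcut_transfer hξt.1 hηt.1 (δ := δ i) hHeq.symm (hB𝒜 i)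
          (hBδ i) ((heB i).2.1.2) hfη
        exact hesξ _ (by rw [List.mem_ofFn]; exact ⟨i, rfl⟩) this
      · rw [Λ.sigma_iter hW hηt.1 hXη, Λ.sigma_iter hW hξt.1 hXξ]
        exact hHeq
    · rintro ⟨hΓ, hm, ⟨hηt, hssη, hfsη⟩, ⟨hξt, heξ, hesξ⟩, hiter⟩
      have hXη : Tr.mk α X α ∈ η := by rw [hss] at hssη; exact hssη
      have hXξ : Tr.mk β X β ∈ ξ := by
        have h := heξ
        rw [hsts] at h
        exact h
      have hHeq : Λ.Hcut α η = Λ.Hcut β ξ := by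
        rw [← Λ.sigma_iter hW hηt.1 hXη, ← Λ.sigma_iter hW hξt.1 hXξ]
        exact hiter
      obtain ⟨-, -, w, hw⟩ := Λ.inGamma_parts hΓ
      have hpre : WPrefix α w := by
        by_cases hα : α = []
        · subst hα; exact wprefix_nil w
        · exact (hw α hα).mp ⟨X, hXη⟩
      obtain ⟨γ, rfl⟩ := exists_wappend hpre
      have Pη : ∀ d : List A, d ≠ [] →
          ((∃ D, Tr.mk (α ++ d) D (α ++ d) ∈ η) ↔ WPrefix d γ) := by
        intro d hd
        rw [hw (α ++ d) (by simp [hd])]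
        exact wprefix_append_iff
      have Pξ : ∀ d : List A, d ≠ [] →
          ((∃ D, Tr.mk (β ++ d) D (β ++ d) ∈ ξ) ↔ WPrefix d γ) := by
        intro d hd
        rw [← Λ.Hcut_level_exists_iff hW hξt.1 β d hd, ← hHeq,
          Λ.Hcut_level_exists_iff hW hηt.1 α d hd]
        exact Pη d hd
      exact ⟨hΓ, hm, heξ, hesξ, γ, hw, Λ.hasWord_wappend hW hξt.1 hXξ Pξ, hHeq⟩


end LblSp
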